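/- Let r > d > 0, (x₀,y₀) ∈ (0,1)², x₀ ≠ y₀. For i,j ∈ ℕ consider F_{i,j}(u) = (x_u)^i (y_u)^j exp(∫₀^u R(x_α,y_α)dα) for u ∈ [0, s₀). Then: if i + j ≥ 2, F_{i,j}(u) → 0 as u → s₀⁻; if i + j = 1, F_{i,j}(u) converges to a finite nonzero limit as u → s₀⁻; and if i = j = 0, |F_{0,0}(u)| → ∞ as u → s₀⁻. -/

import Mathlib

/-- The coefficient `Q(x,y) = (r+d)x − r/2 − (r/2)(x/y) − d·x²`. -/
noncomputable def Qfun (r d x y : ℝ) : ℝ :=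
  (r + d) * x - r / 2 - r / 2 * (x / y) - d * x ^ 2

/-- The coefficient `R(x,y) = r/(2x) + r/(2y) − d·x − d·y`. -/
noncomputable def Rfun (r d x y : ℝ) : ℝ :=
  r / (2 * x) + r / (2 * y) - d * x - d * y

/-- The integration constant `λ = (2d·x₀y₀ − d(x₀+y₀))/((x₀−y₀)(r−d))`. -/
noncomputable def lamOf (r d x₀ y₀ : ℝ) : ℝ :=
  (2 * d * x₀ * y₀ - d * (x₀ + y₀)) / ((x₀ - y₀) * (r - d))

/-- The integration constant `μ = (−2d·x₀y₀ + r(x₀+y₀))/((x₀−y₀)(r−d))`. -/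
noncomputable def muOf (r d x₀ y₀ : ℝ) : ℝ :=
  (-(2 * d * x₀ * y₀) + r * (x₀ + y₀)) / ((x₀ - y₀) * (r - d))

/-- The characteristic curve `x_s = (λre^{rs} + μde^{ds})/(d(λe^{rs} + μe^{ds} + 1))`. -/
noncomputable def xChar (r d lam mu s : ℝ) : ℝ :=
  (lam * r * Real.exp (r * s) + mu * d * Real.exp (d * s))
    / (d * (lam * Real.exp (r * s) + mu * Real.exp (d * s) + 1))

/-- The characteristic curve `y_s = (λre^{rs} + μde^{ds})/(d(λe^{rs} + μe^{ds} − 1))`. -/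
noncomputable def yChar (r d lam mu s : ℝ) : ℝ :=
  (lam * r * Real.exp (r * s) + mu * d * Real.exp (d * s))
    / (d * (lam * Real.exp (r * s) + mu * Real.exp (d * s) - 1))

/-- The time `s₀ = log((x₀ + y₀ − 2x₀y₀)/(x₀ + y₀ − 2(d/r)x₀y₀))/(d − r)`. -/
noncomputable def s0Of (r d x₀ y₀ : ℝ) : ℝ :=
  Real.log ((x₀ + y₀ - 2 * x₀ * y₀) / (x₀ + y₀ - 2 * (d / r) * x₀ * y₀)) / (d - r)

open Filter MeasureTheory

section Aux

noncomputable def Dfun' (r d lam mu s : ℝ) : ℝ :=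
  lam * Real.exp (r * s) + mu * Real.exp (d * s)
noncomputable def Nfun' (r d lam mu s : ℝ) : ℝ :=
  lam * r * Real.exp (r * s) + mu * d * Real.exp (d * s)
noncomputable def N2fun' (r d lam mu s : ℝ) : ℝ :=
  lam * r ^ 2 * Real.exp (r * s) + mu * d ^ 2 * Real.exp (d * s)

lemma xChar_eq (r d lam mu s : ℝ) :
    xChar r d lam mu s = Nfun' r d lam mu s / (d * (Dfun' r d lam mu s + 1)) := rfl
lemma yChar_eq (r d lam mu s : ℝ) :
    yChar r d lam mu s = Nfun' r d lam mu s / (d * (Dfun' r d lam mu s - 1)) := rfl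

lemma Rfun_algebra (r d lam mu s : ℝ) (hd : d ≠ 0)
    (hN : Nfun' r d lam mu s ≠ 0)
    (hDp : Dfun' r d lam mu s + 1 ≠ 0) (hDm : Dfun' r d lam mu s - 1 ≠ 0) :
    Rfun r d (xChar r d lam mu s) (yChar r d lam mu s)
      = (r + d) - N2fun' r d lam mu s / Nfun' r d lam mu s
        - 2 * Dfun' r d lam mu s * Nfun' r d lam mu s / (Dfun' r d lam mu s ^ 2 - 1) := by
  have hD2 : Dfun' r d lam mu s ^ 2 - 1 ≠ 0 := by
    have h := mul_ne_zero hDp hDm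
    intro h'; apply h; nlinarith [h']
  rw [xChar_eq, yChar_eq, Rfun]
  set D := Dfun' r d lam mu s
  set N := Nfun' r d lam mu s
  have key : (r + d) * N - N2fun' r d lam mu s = r * d * D := by
    simp only [Nfun', N2fun', Dfun', N, D]; ring
  have hN2 : N2fun' r d lam mu s = (r + d) * N - r * d * D := by linarith [key]
  rw [hN2]
  field_simp
  ring

lemma hasDerivAt_exp_mul (c s : ℝ) :
    HasDerivAt (fun s => Real.exp (c * s)) (c * Real.exp (c * s)) s := by
  simpa [mul_comm] using ((hasDerivAt_id s).const_mul c).exp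

lemma hasDerivAt_Dfun' (r d lam mu s : ℝ) :
    HasDerivAt (Dfun' r d lam mu) (Nfun' r d lam mu s) s := by
  have h := ((hasDerivAt_exp_mul r s).const_mul lam).add ((hasDerivAt_exp_mul d s).const_mul mu)
  have : lam * (r * Real.exp (r * s)) + mu * (d * Real.exp (d * s)) = Nfun' r d lam mu s := by
    simp only [Nfun']; ring
  rw [this] at h; exact h

lemma hasDerivAt_Nfun' (r d lam mu s : ℝ) :
    HasDerivAt (Nfun' r d lam mu) (N2fun' r d lam mu s) s := by
  have h := ((hasDerivAt_exp_mul r s).const_mul (lam * r)).add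
    ((hasDerivAt_exp_mul d s).const_mul (mu * d))
  have : lam * r * (r * Real.exp (r * s)) + mu * d * (d * Real.exp (d * s))
      = N2fun' r d lam mu s := by simp only [N2fun']; ring
  rw [this] at h; exact h

lemma continuous_Nfun' (r d lam mu : ℝ) : Continuous (Nfun' r d lam mu) := by
  unfold Nfun'; fun_prop

lemma continuous_Dfun' (r d lam mu : ℝ) : Continuous (Dfun' r d lam mu) := by
  unfold Dfun'; fun_prop

lemma continuous_N2fun' (r d lam mu : ℝ) : Continuous (N2fun' r d lam mu) := by
  unfold N2fun'; fun_prop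

lemma integral_R_eq (r d lam mu s₀ : ℝ) (hd : 0 < d) (hs₀ : 0 < s₀)
    (hNne : ∀ t ∈ Set.Ico 0 s₀, Nfun' r d lam mu t ≠ 0)
    (hDsq : ∀ t ∈ Set.Icc 0 s₀, 1 < (Dfun' r d lam mu t) ^ 2)
    (u : ℝ) (hu : u ∈ Set.Ioo 0 s₀) :
    (∫ α in (0:ℝ)..u, Rfun r d (xChar r d lam mu α) (yChar r d lam mu α))
      = ((r + d) * u - Real.log (Nfun' r d lam mu u) - Real.log (Dfun' r d lam mu u ^ 2 - 1))
        - ((r + d) * 0 - Real.log (Nfun' r d lam mu 0) - Real.log (Dfun' r d lam mu 0 ^ 2 - 1)) := by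
  obtain ⟨hu0, hus⟩ := hu
  have huIcc : Set.uIcc (0:ℝ) u = Set.Icc 0 u := Set.uIcc_of_le hu0.le
  have hsub : Set.Icc (0:ℝ) u ⊆ Set.Ico 0 s₀ := fun t ht => ⟨ht.1, lt_of_le_of_lt ht.2 hus⟩
  have hsub' : Set.Icc (0:ℝ) u ⊆ Set.Icc 0 s₀ := fun t ht => ⟨ht.1, le_trans ht.2 hus.le⟩
  set N := Nfun' r d lam mu
  set D := Dfun' r d lam mu
  set G : ℝ → ℝ := fun s => (r + d) * s - Real.log (N s) - Real.log (D s ^ 2 - 1)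
  set f' : ℝ → ℝ := fun t =>
    (r + d) - N2fun' r d lam mu t / N t - 2 * D t * N t / (D t ^ 2 - 1)
  have hD2ne : ∀ t ∈ Set.Icc 0 u, D t ^ 2 - 1 ≠ 0 := fun t ht =>
    ne_of_gt (by linarith [hDsq t (hsub' ht)])
  have hNt : ∀ t ∈ Set.Icc 0 u, N t ≠ 0 := fun t ht => hNne t (hsub ht)
  have hG : ∀ t ∈ Set.uIcc (0:ℝ) u, HasDerivAt G (f' t) t := by
    intro t ht
    rw [huIcc] at ht
    have hlog1 : HasDerivAt (fun s => Real.log (N s))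
        (N2fun' r d lam mu t / N t) t := (hasDerivAt_Nfun' r d lam mu t).log (hNt t ht)
    have hDsq' : HasDerivAt (fun s => D s ^ 2 - 1) (2 * D t * N t) t := by
      have := ((hasDerivAt_Dfun' r d lam mu t).pow 2).sub_const 1
      simpa [mul_comm, mul_assoc, mul_left_comm] using this
    have hlog2 : HasDerivAt (fun s => Real.log (D s ^ 2 - 1))
        (2 * D t * N t / (D t ^ 2 - 1)) t := hDsq'.log (hD2ne t ht)
    have := (((hasDerivAt_id t).const_mul (r + d)).sub hlog1).sub hlog2
    simp only [mul_one] at this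
    exact this
  have hcontf' : ContinuousOn f' (Set.uIcc (0:ℝ) u) := by
    rw [huIcc]
    apply ContinuousOn.sub
    apply ContinuousOn.sub
    · exact continuousOn_const
    · exact ContinuousOn.div (continuous_N2fun' r d lam mu).continuousOn
        (continuous_Nfun' r d lam mu).continuousOn hNt
    · refine ContinuousOn.div ?_ ?_ hD2ne
      · exact (((continuous_const.mul (continuous_Dfun' r d lam mu)).mul
          (continuous_Nfun' r d lam mu))).continuousOn
      · exact (((continuous_Dfun' r d lam mu).pow 2).sub continuous_const).continuousOn
  have hInt : IntervalIntegrable f' MeasureTheory.volume 0 u := hcontf'.intervalIntegrable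
  have hcong : Set.EqOn (fun α => Rfun r d (xChar r d lam mu α) (yChar r d lam mu α)) f'
      (Set.uIcc (0:ℝ) u) := by
    intro t ht
    rw [huIcc] at ht
    have h2 := hDsq t (hsub' ht)
    have hDp : D t + 1 ≠ 0 := by intro h; nlinarith [h]
    have hDm : D t - 1 ≠ 0 := by intro h; nlinarith [h]
    exact Rfun_algebra r d lam mu t hd.ne' (hNt t ht) hDp hDm
  rw [intervalIntegral.integral_congr hcong,
    intervalIntegral.integral_eq_sub_of_hasDerivAt hG hInt]

/-- The limiting factor. -/
noncomputable def Kfun (r d lam mu : ℝ) (i j : ℕ) (u : ℝ) : ℝ :=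
  Real.exp ((r + d) * u) * (Nfun' r d lam mu 0 * (Dfun' r d lam mu 0 ^ 2 - 1))
    / (d ^ (i + j) * (Dfun' r d lam mu u + 1) ^ i * (Dfun' r d lam mu u - 1) ^ j
        * (Dfun' r d lam mu u ^ 2 - 1))

lemma F_formula (r d lam mu s₀ : ℝ) (hd : 0 < d) (hs₀ : 0 < s₀)
    (hNne : ∀ t ∈ Set.Ico 0 s₀, Nfun' r d lam mu t ≠ 0)
    (hNsign : ∀ t ∈ Set.Ico 0 s₀, 0 < Nfun' r d lam mu 0 / Nfun' r d lam mu t)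
    (hDsq : ∀ t ∈ Set.Icc 0 s₀, 1 < (Dfun' r d lam mu t) ^ 2)
    (u : ℝ) (hu : u ∈ Set.Ioo 0 s₀) (i j : ℕ) :
    xChar r d lam mu u ^ i * yChar r d lam mu u ^ j *
      Real.exp (∫ α in (0:ℝ)..u, Rfun r d (xChar r d lam mu α) (yChar r d lam mu α))
    = Nfun' r d lam mu u ^ (i + j) / Nfun' r d lam mu u * Kfun r d lam mu i j u := by
  set N := Nfun' r d lam mu with hN
  set D := Dfun' r d lam mu with hD
  have huI : u ∈ Set.Ico 0 s₀ := ⟨hu.1.le, hu.2⟩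
  have h0I : (0:ℝ) ∈ Set.Ico 0 s₀ := ⟨le_refl _, hs₀⟩
  have hNu : N u ≠ 0 := hNne u huI
  have hN0 : N 0 ≠ 0 := hNne 0 h0I
  have hDu2 : (0:ℝ) < D u ^ 2 - 1 := by
    linarith [hDsq u ⟨hu.1.le, hu.2.le⟩]
  have hD02 : (0:ℝ) < D 0 ^ 2 - 1 := by
    linarith [hDsq 0 ⟨le_refl _, hs₀.le⟩]
  have hDup : D u + 1 ≠ 0 := by intro h; nlinarith [h]
  have hDum : D u - 1 ≠ 0 := by intro h; nlinarith [h]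
  have hint := integral_R_eq r d lam mu s₀ hd hs₀ hNne hDsq u hu
  rw [hint]
  have hlog : ((r + d) * u - Real.log (N u) - Real.log (D u ^ 2 - 1))
      - ((r + d) * 0 - Real.log (N 0) - Real.log (D 0 ^ 2 - 1))
      = (r + d) * u + Real.log (N 0 / N u) + Real.log ((D 0 ^ 2 - 1) / (D u ^ 2 - 1)) := by
    rw [Real.log_div hN0 hNu, Real.log_div (ne_of_gt hD02) (ne_of_gt hDu2)]
    ring
  rw [hlog, Real.exp_add, Real.exp_add, Real.exp_log (hNsign u huI),
    Real.exp_log (div_pos hD02 hDu2)]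
  rw [xChar_eq, yChar_eq, Kfun]
  rw [← hN, ← hD]
  rw [div_pow, div_pow, mul_pow d (D u + 1) i, mul_pow d (D u - 1) j]
  have hdi : d ^ i ≠ 0 := pow_ne_zero _ hd.ne'
  have hdj : d ^ j ≠ 0 := pow_ne_zero _ hd.ne'
  have hDupi : (D u + 1) ^ i ≠ 0 := pow_ne_zero _ hDup
  have hDumj : (D u - 1) ^ j ≠ 0 := pow_ne_zero _ hDum
  field_simp
  ring

lemma key_limits (r d lam mu s₀ : ℝ) (hd : 0 < d) (hs₀ : 0 < s₀)
    (hNs₀ : Nfun' r d lam mu s₀ = 0)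
    (hNsign : ∀ t ∈ Set.Ico 0 s₀, 0 < Nfun' r d lam mu 0 / Nfun' r d lam mu t)
    (hDsq : ∀ t ∈ Set.Icc 0 s₀, 1 < (Dfun' r d lam mu t) ^ 2) (i j : ℕ) :
    (2 ≤ i + j →
      Tendsto (fun u => xChar r d lam mu u ^ i * yChar r d lam mu u ^ j *
          Real.exp (∫ α in (0:ℝ)..u, Rfun r d (xChar r d lam mu α) (yChar r d lam mu α)))
        (nhdsWithin s₀ (Set.Iio s₀)) (nhds 0)) ∧
    (i + j = 1 →
      ∃ L : ℝ, L ≠ 0 ∧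
        Tendsto (fun u => xChar r d lam mu u ^ i * yChar r d lam mu u ^ j *
            Real.exp (∫ α in (0:ℝ)..u, Rfun r d (xChar r d lam mu α) (yChar r d lam mu α)))
          (nhdsWithin s₀ (Set.Iio s₀)) (nhds L)) ∧
    (i = 0 → j = 0 →
      Tendsto (fun u => |xChar r d lam mu u ^ i * yChar r d lam mu u ^ j *
          Real.exp (∫ α in (0:ℝ)..u, Rfun r d (xChar r d lam mu α) (yChar r d lam mu α))|)
        (nhdsWithin s₀ (Set.Iio s₀)) atTop) := by
  set N := Nfun' r d lam mu with hN
  set D := Dfun' r d lam mu with hD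
  have hNne : ∀ t ∈ Set.Ico 0 s₀, N t ≠ 0 := by
    intro t ht h
    have := hNsign t ht
    rw [h, div_zero] at this
    exact lt_irrefl 0 this
  have hIoo : Set.Ioo 0 s₀ ∈ nhdsWithin s₀ (Set.Iio s₀) :=
    Ioo_mem_nhdsLT_of_mem ⟨hs₀, le_refl _⟩
  have hDs₀ := hDsq s₀ ⟨hs₀.le, le_refl _⟩
  have hD02 : (0:ℝ) < D 0 ^ 2 - 1 := by linarith [hDsq 0 ⟨le_refl _, hs₀.le⟩]
  have hN0 : N 0 ≠ 0 := hNne 0 ⟨le_refl _, hs₀⟩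
  have hDsp : D s₀ + 1 ≠ 0 := by intro h; nlinarith [h]
  have hDsm : D s₀ - 1 ≠ 0 := by intro h; nlinarith [h]
  have hden : d ^ (i + j) * (D s₀ + 1) ^ i * (D s₀ - 1) ^ j * (D s₀ ^ 2 - 1) ≠ 0 := by
    have h2 : D s₀ ^ 2 - 1 ≠ 0 := by intro h; nlinarith [h]
    exact mul_ne_zero (mul_ne_zero (mul_ne_zero (pow_ne_zero _ hd.ne')
      (pow_ne_zero _ hDsp)) (pow_ne_zero _ hDsm)) h2
  have hDc := continuous_Dfun' r d lam mu
  have hNc := continuous_Nfun' r d lam mu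
  have hden_cont : Continuous (fun u => d ^ (i + j) * (D u + 1) ^ i * (D u - 1) ^ j
      * (D u ^ 2 - 1)) :=
    ((((continuous_const.mul ((hDc.add continuous_const).pow i)).mul
      ((hDc.sub continuous_const).pow j))).mul ((hDc.pow 2).sub continuous_const))
  have hnum_cont : Continuous (fun u : ℝ => Real.exp ((r + d) * u) * (N 0 * (D 0 ^ 2 - 1))) :=
    (Real.continuous_exp.comp (continuous_const.mul continuous_id)).mul continuous_const
  have hKtend : Tendsto (Kfun r d lam mu i j) (nhdsWithin s₀ (Set.Iio s₀))
      (nhds (Kfun r d lam mu i j s₀)) := by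
    have := Filter.Tendsto.div (hnum_cont.tendsto s₀) (hden_cont.tendsto s₀) hden
    exact (this.mono_left nhdsWithin_le_nhds :)
  have hKne : Kfun r d lam mu i j s₀ ≠ 0 :=
    div_ne_zero (mul_ne_zero (Real.exp_ne_zero _) (mul_ne_zero hN0 hD02.ne')) hden
  have hNtend0 : Tendsto N (nhdsWithin s₀ (Set.Iio s₀)) (nhds 0) := by
    have := (hNc.tendsto s₀).mono_left (nhdsWithin_le_nhds (s := Set.Iio s₀))
    rwa [show Nfun' r d lam mu s₀ = 0 from hNs₀] at this
  refine ⟨fun hij => ?_, fun hij => ?_, fun hi hj => ?_⟩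
  · -- i + j ≥ 2
    have heq : ∀ᶠ u in nhdsWithin s₀ (Set.Iio s₀),
        N u ^ (i + j - 1) * Kfun r d lam mu i j u
          = xChar r d lam mu u ^ i * yChar r d lam mu u ^ j *
              Real.exp (∫ α in (0:ℝ)..u, Rfun r d (xChar r d lam mu α) (yChar r d lam mu α)) := by
      refine eventually_of_mem hIoo fun u hu => ?_
      rw [F_formula r d lam mu s₀ hd hs₀ hNne hNsign hDsq u hu i j]
      obtain ⟨k, hk⟩ : ∃ k, i + j = k + 1 := ⟨i + j - 1, by omega⟩
      rw [hk]
      rw [pow_succ, mul_div_assoc, div_self (hNne u ⟨hu.1.le, hu.2⟩), mul_one,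
        Nat.add_sub_cancel]
    have hpow : Tendsto (fun u => N u ^ (i + j - 1)) (nhdsWithin s₀ (Set.Iio s₀)) (nhds 0) := by
      have := hNtend0.pow (i + j - 1)
      rwa [zero_pow (by omega : i + j - 1 ≠ 0)] at this
    have := hpow.mul hKtend
    rw [zero_mul] at this
    exact this.congr' heq
  · -- i + j = 1
    refine ⟨Kfun r d lam mu i j s₀, hKne, ?_⟩
    have heq : ∀ᶠ u in nhdsWithin s₀ (Set.Iio s₀),
        Kfun r d lam mu i j u
          = xChar r d lam mu u ^ i * yChar r d lam mu u ^ j *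
              Real.exp (∫ α in (0:ℝ)..u, Rfun r d (xChar r d lam mu α) (yChar r d lam mu α)) := by
      refine eventually_of_mem hIoo fun u hu => ?_
      rw [F_formula r d lam mu s₀ hd hs₀ hNne hNsign hDsq u hu i j, hij, pow_one,
        div_self (hNne u ⟨hu.1.le, hu.2⟩), one_mul]
    exact hKtend.congr' heq
  · -- i = j = 0
    subst hi hj
    have habs : Tendsto (fun u => |N u|) (nhdsWithin s₀ (Set.Iio s₀))
        (nhdsWithin 0 (Set.Ioi 0)) := by
      apply tendsto_nhdsWithin_of_tendsto_nhds_of_eventually_within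
      · simpa using hNtend0.abs
      · exact eventually_of_mem hIoo fun u hu => abs_pos.2 (hNne u ⟨hu.1.le, hu.2⟩)
    have hinv : Tendsto (fun u => |N u|⁻¹) (nhdsWithin s₀ (Set.Iio s₀)) atTop :=
      tendsto_inv_nhdsGT_zero.comp habs
    have hmul := Filter.Tendsto.pos_mul_atTop (abs_pos.2 hKne) hKtend.abs hinv
    have heq : ∀ᶠ u in nhdsWithin s₀ (Set.Iio s₀),
        |Kfun r d lam mu 0 0 u| * |N u|⁻¹
          = |xChar r d lam mu u ^ 0 * yChar r d lam mu u ^ 0 *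
              Real.exp (∫ α in (0:ℝ)..u, Rfun r d (xChar r d lam mu α) (yChar r d lam mu α))| := by
      refine eventually_of_mem hIoo fun u hu => ?_
      rw [F_formula r d lam mu s₀ hd hs₀ hNne hNsign hDsq u hu 0 0]
      rw [show (0 + 0 : ℕ) = 0 from rfl, pow_zero]
      rw [abs_mul, abs_div, abs_one, one_div, mul_comm]
    exact hmul.congr' heq

section Concrete

variable (r d x₀ y₀ : ℝ)

lemma concrete (hd : 0 < d) (hrd : d < r)
    (hx₀ : x₀ ∈ Set.Ioo (0:ℝ) 1) (hy₀ : y₀ ∈ Set.Ioo (0:ℝ) 1) (hne : x₀ ≠ y₀) :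
    0 < s0Of r d x₀ y₀ ∧
    Nfun' r d (lamOf r d x₀ y₀) (muOf r d x₀ y₀) (s0Of r d x₀ y₀) = 0 ∧
    (∀ t ∈ Set.Ico 0 (s0Of r d x₀ y₀),
      0 < Nfun' r d (lamOf r d x₀ y₀) (muOf r d x₀ y₀) 0
            / Nfun' r d (lamOf r d x₀ y₀) (muOf r d x₀ y₀) t) ∧
    (∀ t ∈ Set.Icc 0 (s0Of r d x₀ y₀),
      1 < (Dfun' r d (lamOf r d x₀ y₀) (muOf r d x₀ y₀) t) ^ 2) := by
  obtain ⟨hx0, hx1⟩ := hx₀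
  obtain ⟨hy0, hy1⟩ := hy₀
  have hr : 0 < r := hd.trans hrd
  obtain ⟨A, hAdef⟩ : ∃ A : ℝ, A = x₀ + y₀ - 2 * x₀ * y₀ := ⟨_, rfl⟩
  obtain ⟨B, hBdef⟩ : ∃ B : ℝ, B = x₀ + y₀ - 2 * (d / r) * x₀ * y₀ := ⟨_, rfl⟩
  obtain ⟨Δ, hΔdef⟩ : ∃ Δ : ℝ, Δ = (x₀ - y₀) * (r - d) := ⟨_, rfl⟩
  have hq0 : 0 < d / r := div_pos hd hr
  have hq1 : d / r < 1 := (div_lt_one hr).2 hrd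
  have hA : 0 < A := by rw [hAdef]; nlinarith
  have hAB : A < B := by
    rw [hAdef, hBdef]
    nlinarith [mul_pos (mul_pos hx0 hy0) (sub_pos.2 hq1)]
  have hB : 0 < B := hA.trans hAB
  have hΔ : Δ ≠ 0 := by
    rw [hΔdef]; exact mul_ne_zero (sub_ne_zero.2 hne) (ne_of_gt (by linarith))
  set s₀ := s0Of r d x₀ y₀ with hs₀def
  have hs₀eq : s₀ = Real.log (A / B) / (d - r) := by
    rw [hs₀def, s0Of, hAdef, hBdef]
  have hlogneg : Real.log (A / B) < 0 :=
    Real.log_neg (div_pos hA hB) ((div_lt_one hB).2 hAB)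
  have hs₀pos : 0 < s₀ := by
    rw [hs₀eq]
    exact div_pos_of_neg_of_neg hlogneg (by linarith)
  have hexp : Real.exp ((d - r) * s₀) = A / B := by
    rw [hs₀eq, mul_div_cancel₀ _ (show d - r ≠ 0 by linarith), Real.exp_log (div_pos hA hB)]
  have hlam : lamOf r d x₀ y₀ = (-(d * A)) / Δ := by
    rw [lamOf, hΔdef, hAdef]; congr 1; ring
  have hmu : muOf r d x₀ y₀ = (r * B) / Δ := by
    rw [muOf, hΔdef, hBdef]; congr 1; field_simp; ring
  have hNform : ∀ s, Nfun' r d (lamOf r d x₀ y₀) (muOf r d x₀ y₀) s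
      = (d * r / Δ) * (B * Real.exp (d * s) - A * Real.exp (r * s)) := by
    intro s
    rw [Nfun', hlam, hmu]
    field_simp
    ring
  have hDform : ∀ s, Dfun' r d (lamOf r d x₀ y₀) (muOf r d x₀ y₀) s
      = (r * B * Real.exp (d * s) - d * A * Real.exp (r * s)) / Δ := by
    intro s
    rw [Dfun', hlam, hmu]
    field_simp
    ring
  have hP : ∀ s < s₀, 0 < B * Real.exp (d * s) - A * Real.exp (r * s) := by
    intro s hs
    have h1 : (d - r) * s₀ < (d - r) * s :=
      mul_lt_mul_of_neg_left hs (by linarith)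
    have h2 : A / B < Real.exp ((d - r) * s) := by
      rw [← hexp]; exact Real.exp_lt_exp.2 h1
    have h3 : A < B * Real.exp ((d - r) * s) := by
      rw [div_lt_iff₀ hB] at h2; linarith [h2]
    have h4 : Real.exp (r * s) * Real.exp ((d - r) * s) = Real.exp (d * s) := by
      rw [← Real.exp_add]; congr 1; ring
    have h5 : 0 < Real.exp (r * s) := Real.exp_pos _
    nlinarith [h3, h4, h5]
  have hNs₀ : Nfun' r d (lamOf r d x₀ y₀) (muOf r d x₀ y₀) s₀ = 0 := by
    rw [hNform]
    have h4 : Real.exp (r * s₀) * Real.exp ((d - r) * s₀) = Real.exp (d * s₀) := by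
      rw [← Real.exp_add]; congr 1; ring
    rw [hexp] at h4
    have : B * Real.exp (d * s₀) - A * Real.exp (r * s₀) = 0 := by
      rw [← h4]; field_simp; ring
    rw [this, mul_zero]
  have hNsign : ∀ t ∈ Set.Ico 0 s₀,
      0 < Nfun' r d (lamOf r d x₀ y₀) (muOf r d x₀ y₀) 0
            / Nfun' r d (lamOf r d x₀ y₀) (muOf r d x₀ y₀) t := by
    intro t ht
    rw [hNform, hNform]
    have hc : d * r / Δ ≠ 0 := div_ne_zero (by positivity) hΔ
    rw [mul_div_mul_left _ _ hc]
    have h0 : 0 < B * Real.exp (d * 0) - A * Real.exp (r * 0) := hP 0 hs₀pos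
    exact div_pos h0 (hP t ht.2)
  have hE : ∀ t ∈ Set.Icc 0 s₀,
      (r - d) * (x₀ + y₀) ≤ r * B * Real.exp (d * t) - d * A * Real.exp (r * t) := by
    have hEc : Continuous (fun s : ℝ => r * B * Real.exp (d * s) - d * A * Real.exp (r * s)) := by
      fun_prop
    have hEd : ∀ s : ℝ, HasDerivAt
        (fun s : ℝ => r * B * Real.exp (d * s) - d * A * Real.exp (r * s))
        (d * r * (B * Real.exp (d * s) - A * Real.exp (r * s))) s := by
      intro s
      have h := ((hasDerivAt_exp_mul d s).const_mul (r * B)).sub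
        ((hasDerivAt_exp_mul r s).const_mul (d * A))
      have heq : r * B * (d * Real.exp (d * s)) - d * A * (r * Real.exp (r * s))
          = d * r * (B * Real.exp (d * s) - A * Real.exp (r * s)) := by ring
      rw [heq] at h
      exact h
    have hmono : MonotoneOn (fun s : ℝ => r * B * Real.exp (d * s) - d * A * Real.exp (r * s))
        (Set.Icc 0 s₀) := by
      apply monotoneOn_of_deriv_nonneg (convex_Icc 0 s₀) hEc.continuousOn
      · intro x _
        exact (hEd x).differentiableAt.differentiableWithinAt
      · intro x hx
        rw [interior_Icc] at hx
        rw [(hEd x).deriv]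
        have := hP x hx.2
        positivity
    intro t ht
    have hle := hmono (Set.left_mem_Icc.2 hs₀pos.le) ht ht.1
    have hle' : r * B * Real.exp (d * 0) - d * A * Real.exp (r * 0)
        ≤ r * B * Real.exp (d * t) - d * A * Real.exp (r * t) := hle
    have h00 : r * B * Real.exp (d * 0) - d * A * Real.exp (r * 0) = r * B - d * A := by
      simp
    have hrBdA : r * B - d * A = (r - d) * (x₀ + y₀) := by
      rw [hAdef, hBdef]; field_simp; ring
    rw [h00, hrBdA] at hle'
    exact hle'
  have hDsq : ∀ t ∈ Set.Icc 0 s₀,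
      1 < (Dfun' r d (lamOf r d x₀ y₀) (muOf r d x₀ y₀) t) ^ 2 := by
    intro t ht
    rw [hDform, div_pow, lt_div_iff₀ (by positivity : (0:ℝ) < Δ ^ 2), one_mul]
    have h2 : 0 < (r - d) * (x₀ + y₀) :=
      mul_pos (sub_pos.2 hrd) (by linarith)
    have hxy : (x₀ - y₀) ^ 2 < (x₀ + y₀) ^ 2 := by
      have h5 : 0 < x₀ * y₀ := mul_pos hx0 hy0
      have h6 : (x₀ + y₀) ^ 2 - (x₀ - y₀) ^ 2 = 4 * (x₀ * y₀) := by ring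
      linarith [h5, h6]
    have h1 := hE t ht
    have h3 : ((r - d) * (x₀ + y₀)) ^ 2
        ≤ (r * B * Real.exp (d * t) - d * A * Real.exp (r * t)) ^ 2 :=
      pow_le_pow_left₀ h2.le h1 2
    have h4 : Δ ^ 2 < ((r - d) * (x₀ + y₀)) ^ 2 := by
      rw [hΔdef]
      calc ((x₀ - y₀) * (r - d)) ^ 2 = (r - d) ^ 2 * (x₀ - y₀) ^ 2 := by ring
        _ < (r - d) ^ 2 * (x₀ + y₀) ^ 2 :=
            mul_lt_mul_of_pos_left hxy (pow_pos (sub_pos.2 hrd) 2)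
        _ = ((r - d) * (x₀ + y₀)) ^ 2 := by ring
    linarith [h3, h4]
  exact ⟨hs₀pos, hNs₀, hNsign, hDsq⟩

end Concrete

end Aux

/-- behavior as `u → s₀⁻` of
`F_{i,j}(u) = x_u^i · y_u^j · exp(∫₀^u R(x_α,y_α)dα)`: it tends to `0` if `i + j ≥ 2`, to
a finite nonzero limit if `i + j = 1`, and `|F_{0,0}(u)| → ∞` if `i = j = 0`. -/
theorem F_ij_limit_at_s0 (r d x₀ y₀ : ℝ) (hd : 0 < d) (hrd : d < r)
    (hx₀ : x₀ ∈ Set.Ioo (0 : ℝ) 1) (hy₀ : y₀ ∈ Set.Ioo (0 : ℝ) 1) (hne : x₀ ≠ y₀)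
    (X Y : ℝ → ℝ)
    (hX : X = fun s => xChar r d (lamOf r d x₀ y₀) (muOf r d x₀ y₀) s)
    (hY : Y = fun s => yChar r d (lamOf r d x₀ y₀) (muOf r d x₀ y₀) s)
    (F : ℕ → ℕ → ℝ → ℝ)
    (hF : F = fun i j u =>
      X u ^ i * Y u ^ j * Real.exp (∫ α in (0 : ℝ)..u, Rfun r d (X α) (Y α))) :
    ∀ i j : ℕ,
      (2 ≤ i + j →
        Tendsto (F i j) (nhdsWithin (s0Of r d x₀ y₀) (Set.Iio (s0Of r d x₀ y₀)))
          (nhds 0)) ∧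
      (i + j = 1 →
        ∃ L : ℝ, L ≠ 0 ∧
          Tendsto (F i j) (nhdsWithin (s0Of r d x₀ y₀) (Set.Iio (s0Of r d x₀ y₀)))
            (nhds L)) ∧
      (i = 0 → j = 0 →
        Tendsto (fun u => |F i j u|)
          (nhdsWithin (s0Of r d x₀ y₀) (Set.Iio (s0Of r d x₀ y₀))) atTop) := by
  subst hX hY hF
  obtain ⟨hs₀pos, hNs₀, hNsign, hDsq⟩ := concrete r d x₀ y₀ hd hrd hx₀ hy₀ hne
  intro i j
  exact key_limits r d (lamOf r d x₀ y₀) (muOf r d x₀ y₀) (s0Of r d x₀ y₀)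
    hd hs₀pos hNs₀ hNsign hDsq i j
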